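/- arXiv:2012.05435 — 2 statements merged into one kernel-verified Lean document; each statement's English description precedes it below -/
import Mathlib

section
/- Suppose moreover that Ψ is bounded below on E and that γ^t ≥ γ_min for all t, where γ_min > L. Then under the hypotheses of the monotone descent property (Ψ(v^t) ≤ Ψ(u^t) and u^{t+1} minimizing u ↦ φ(u) + (γ^t/2)·‖u − v^t + (1/γ^t)·∇f(v^t)‖² for each t), the series ∑_t ‖u^{t+1} − v^t‖² converges; in particular ‖u^{t+1} − v^t‖ → 0 as t → ∞. -/
open scoped RealInnerProductSpace


lemma descent_lemma
    {E : Type*} [NormedAddCommGroup E] [InnerProductSpace ℝ E]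
    (f : E → ℝ) (gradf : E → E) (L : ℝ) (hL : 0 ≤ L)
    (hgrad : ∀ x : E, HasFDerivAt f (innerSL ℝ (gradf x)) x)
    (hlip : ∀ x y : E, ‖gradf x - gradf y‖ ≤ L * ‖x - y‖)
    (x y : E) :
    f y ≤ f x + ⟪gradf x, y - x⟫ + L / 2 * ‖y - x‖ ^ 2 := by
  set d := y - x with hd
  have hcont : Continuous gradf := by
    have : LipschitzWith (Real.toNNReal L) gradf := by
      apply LipschitzWith.of_dist_le_mul
      intro a b
      simpa [dist_eq_norm, Real.coe_toNNReal L hL] using hlip a b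
    exact this.continuous
  have hderiv : ∀ t : ℝ, HasDerivAt (fun s : ℝ => f (x + s • d))
      ⟪gradf (x + t • d), d⟫ t := by
    intro t
    have hline : HasDerivAt (fun s : ℝ => x + s • d) d t := by
      simpa using ((hasDerivAt_id t).smul_const d).const_add x
    have := (hgrad (x + t • d)).comp_hasDerivAt t hline
    simp [Function.comp, Real.sqrt_zero] at this
    exact this
  have hcont' : Continuous fun t : ℝ => ⟪gradf (x + t • d), d⟫ := by
    exact (hcont.comp (by continuity)).inner continuous_const
  have hftc : ∫ t in (0:ℝ)..1, ⟪gradf (x + t • d), d⟫ = f y - f x := by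
    have h := intervalIntegral.integral_eq_sub_of_hasDerivAt
      (f := fun s : ℝ => f (x + s • d))
      (fun t _ => hderiv t) (hcont'.intervalIntegrable 0 1)
    simpa [hd] using h
  have hbound : ∫ t in (0:ℝ)..1, ⟪gradf (x + t • d), d⟫ ≤
      ⟪gradf x, d⟫ + L / 2 * ‖d‖ ^ 2 := by
    have h1 : ∀ t ∈ Set.Icc (0:ℝ) 1,
        ⟪gradf (x + t • d), d⟫ ≤ ⟪gradf x, d⟫ + L * t * ‖d‖ ^ 2 := by
      intro t ht
      have : ⟪gradf (x + t • d) - gradf x, d⟫ ≤ L * t * ‖d‖ ^ 2 := by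
        calc ⟪gradf (x + t • d) - gradf x, d⟫
            ≤ ‖gradf (x + t • d) - gradf x‖ * ‖d‖ := real_inner_le_norm _ _
          _ ≤ (L * ‖(x + t • d) - x‖) * ‖d‖ := by
              gcongr; exact hlip _ _
          _ = L * t * ‖d‖ ^ 2 := by
              simp [norm_smul, abs_of_nonneg ht.1]; ring
      have hsub : ⟪gradf (x + t • d) - gradf x, d⟫
          = ⟪gradf (x + t • d), d⟫ - ⟪gradf x, d⟫ := by
        rw [inner_sub_left]
      linarith [this, hsub.symm ▸ this]
    have h2 : ∫ t in (0:ℝ)..1, ⟪gradf (x + t • d), d⟫ ≤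
        ∫ t in (0:ℝ)..1, (⟪gradf x, d⟫ + L * t * ‖d‖ ^ 2) := by
      apply intervalIntegral.integral_mono_on (by norm_num)
        (hcont'.intervalIntegrable 0 1)
        ((by continuity : Continuous fun t : ℝ => ⟪gradf x, d⟫ + L * t * ‖d‖ ^ 2).intervalIntegrable 0 1)
      exact h1
    have h3 : ∫ t in (0:ℝ)..1, (⟪gradf x, d⟫ + L * t * ‖d‖ ^ 2)
        = ⟪gradf x, d⟫ + L / 2 * ‖d‖ ^ 2 := by
      have : (fun t : ℝ => ⟪gradf x, d⟫ + L * t * ‖d‖ ^ 2)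
          = fun t : ℝ => ⟪gradf x, d⟫ + (L * ‖d‖ ^ 2) * t := by
        funext t; ring
      rw [this, intervalIntegral.integral_add intervalIntegrable_const
        ((by fun_prop : Continuous fun t : ℝ => L * ‖d‖ ^ 2 * t).intervalIntegrable 0 1),
        intervalIntegral.integral_const,
        intervalIntegral.integral_const_mul, integral_id]
      norm_num
      ring
    linarith
  linarith [hftc ▸ hbound]


/-- if moreover `Ψ` is bounded below and `γ t ≥ γ_min > L` for all
`t`, then under the monotone-descent hypotheses, `∑ t, ‖u (t+1) − v t‖²`
converges; in particular `‖u (t+1) − v t‖ → 0`. -/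
theorem stmt4
    {E : Type*} [NormedAddCommGroup E] [InnerProductSpace ℝ E]
    (f : E → ℝ) (φ : E → ℝ) (gradf : E → E) (L : ℝ)
    (hL : 0 < L)
    (hgrad : ∀ x : E, HasFDerivAt f (innerSL ℝ (gradf x)) x)
    (hlip : ∀ x y : E, ‖gradf x - gradf y‖ ≤ L * ‖x - y‖)
    (Ψ : E → ℝ) (hΨ : ∀ x : E, Ψ x = f x + φ x)
    (u v : ℕ → E) (γ : ℕ → ℝ) (γ_min : ℝ)
    (hbdd : ∃ m : ℝ, ∀ x : E, m ≤ Ψ x)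
    (hγmin : γ_min > L)
    (hγ : ∀ t : ℕ, γ t ≥ γ_min)
    (hcheck : ∀ t : ℕ, Ψ (v t) ≤ Ψ (u t))
    (hmin : ∀ t : ℕ, ∀ x : E,
      φ (u (t + 1)) + (γ t / 2) * ‖u (t + 1) - v t + (1 / γ t) • gradf (v t)‖ ^ 2 ≤
        φ x + (γ t / 2) * ‖x - v t + (1 / γ t) • gradf (v t)‖ ^ 2) :
    Summable (fun t : ℕ => ‖u (t + 1) - v t‖ ^ 2) ∧
      Filter.Tendsto (fun t : ℕ => ‖u (t + 1) - v t‖) Filter.atTop (nhds 0) := by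
  obtain ⟨m, hm⟩ := hbdd
  set c : ℝ := (γ_min - L) / 2 with hc
  have hcpos : 0 < c := by simp [hc]; linarith
  have key : ∀ t : ℕ, Ψ (u (t + 1)) + c * ‖u (t + 1) - v t‖ ^ 2 ≤ Ψ (u t) := by
    intro t
    have hγt : γ t ≥ γ_min := hγ t
    have hγpos : 0 < γ t := by linarith
    set g : E := gradf (v t) with hg
    set d : E := u (t + 1) - v t with hdd
    -- expand the prox inequality at x = v t
    have hexp := hmin t (v t)
    have e1 : u (t + 1) - v t + (1 / γ t) • g = d + (1 / γ t) • g := by rw [hdd]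
    have e2 : v t - v t + (1 / γ t) • g = (0 : E) + (1 / γ t) • g := by rw [sub_self]
    have hsq1 : ‖d + (1 / γ t) • g‖ ^ 2
        = ‖d‖ ^ 2 + 2 * ((1 / γ t) * ⟪d, g⟫) + ‖(1 / γ t) • g‖ ^ 2 := by
      rw [norm_add_sq_real, real_inner_smul_right]
    have hstep1 : φ (u (t + 1)) + ⟪d, g⟫ + (γ t / 2) * ‖d‖ ^ 2 ≤ φ (v t) := by
      rw [e1, e2, zero_add] at hexp
      rw [hsq1] at hexp
      have hne : γ t ≠ 0 := ne_of_gt hγpos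
      have : (γ t / 2) * (2 * ((1 / γ t) * ⟪d, g⟫)) = ⟪d, g⟫ := by
        field_simp
      nlinarith [hexp]
    -- descent lemma
    have hstep2 : f (u (t + 1)) ≤ f (v t) + ⟪g, d⟫ + L / 2 * ‖d‖ ^ 2 := by
      simpa [hdd, hg] using descent_lemma f gradf L hL.le hgrad hlip (v t) (u (t + 1))
    have hcomm : ⟪g, d⟫ = ⟪d, g⟫ := real_inner_comm d g
    have hΨ1 := hΨ (u (t + 1))
    have hΨ2 := hΨ (v t)
    have hchk := hcheck t
    have hcd : c ≤ (γ t - L) / 2 := by rw [hc]; linarith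
    nlinarith [sq_nonneg ‖d‖, norm_nonneg d]
  have key2 : ∀ n : ℕ,
      Ψ (u n) + c * ∑ t ∈ Finset.range n, ‖u (t + 1) - v t‖ ^ 2 ≤ Ψ (u 0) := by
    intro n
    induction n with
    | zero => simp
    | succ n ih =>
      rw [Finset.sum_range_succ, mul_add]
      have := key n
      linarith
  have hsum : Summable (fun t : ℕ => ‖u (t + 1) - v t‖ ^ 2) := by
    apply summable_of_sum_range_le (c := (Ψ (u 0) - m) / c)
      (fun t => by positivity)
    intro n
    have h1 := key2 n
    have h2 := hm (u n)
    rw [le_div_iff₀ hcpos]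
    nlinarith
  refine ⟨hsum, ?_⟩
  have h0 := hsum.tendsto_atTop_zero
  have hrw : (fun t : ℕ => ‖u (t + 1) - v t‖)
      = fun t : ℕ => Real.sqrt (‖u (t + 1) - v t‖ ^ 2) := by
    funext t; rw [Real.sqrt_sq (norm_nonneg _)]
  rw [hrw]
  have h1 : Filter.Tendsto (fun t : ℕ => Real.sqrt (‖u (t + 1) - v t‖ ^ 2))
      Filter.atTop (nhds (Real.sqrt 0)) :=
    (Real.continuous_sqrt.tendsto 0).comp h0
  simpa [Real.sqrt_zero] using h1
end

section
/- (Cocoercivity of a convex function with Lipschitz gradient.) If f is convex and ∇f is Lipschitz continuous with constant L > 0, then for all x, y ∈ E, ⟪∇f(x) − ∇f(y), x − y⟫ ≥ (1/L)·‖∇f(x) − ∇f(y)‖². -/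
open scoped RealInnerProductSpace

private lemma fcomp_deriv {E : Type*} [NormedAddCommGroup E] [InnerProductSpace ℝ E]
    (f : E → ℝ) (gradf : E → E)
    (hgrad : ∀ x : E, HasFDerivAt f (innerSL ℝ (gradf x)) x)
    (x d : E) (t : ℝ) :
    HasDerivAt (fun s : ℝ => f (x + s • d)) ⟪gradf (x + t • d), d⟫ t := by
  have hline : HasDerivAt (fun s : ℝ => x + s • d) d t := by
    simpa using ((hasDerivAt_id t).smul_const d).const_add x
  exact (hgrad (x + t • d)).comp_hasDerivAt t hline

/-- Gradient inequality for convex functions. -/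
private lemma grad_ineq {E : Type*} [NormedAddCommGroup E] [InnerProductSpace ℝ E]
    (f : E → ℝ) (gradf : E → E)
    (hgrad : ∀ x : E, HasFDerivAt f (innerSL ℝ (gradf x)) x)
    (hf : ConvexOn ℝ Set.univ f) (x y : E) :
    f x + ⟪gradf x, y - x⟫ ≤ f y := by
  set g : ℝ → ℝ := fun t => f (x + t • (y - x)) with hg
  have hgconv : ConvexOn ℝ Set.univ g := by
    have h := hf.comp_affineMap (AffineMap.lineMap x y : ℝ →ᵃ[ℝ] E)
    have heq : (f ∘ (AffineMap.lineMap x y : ℝ →ᵃ[ℝ] E)) = g := by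
      funext t; simp [AffineMap.lineMap_apply, hg, add_comm]
    rw [heq] at h
    simpa using h
  have hderiv : HasDerivAt g ⟪gradf x, y - x⟫ 0 := by
    simpa using fcomp_deriv f gradf hgrad x (y - x) 0
  have := hgconv.le_slope_of_hasDerivAt (Set.mem_univ 0) (Set.mem_univ 1)
    zero_lt_one hderiv
  have hslope : slope g 0 1 = g 1 - g 0 := by simp [slope_def_field]
  rw [hslope] at this
  have h0 : g 0 = f x := by simp [hg]
  have h1 : g 1 = f y := by simp [hg]
  rw [h0, h1] at this
  linarith

/-- Descent lemma. -/
private lemma descent {E : Type*} [NormedAddCommGroup E] [InnerProductSpace ℝ E]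
    (f : E → ℝ) (gradf : E → E)
    (hgrad : ∀ x : E, HasFDerivAt f (innerSL ℝ (gradf x)) x)
    (L : ℝ) (hL : 0 < L)
    (hlip : ∀ x y : E, ‖gradf x - gradf y‖ ≤ L * ‖x - y‖) (x y : E) :
    f y ≤ f x + ⟪gradf x, y - x⟫ + L / 2 * ‖y - x‖ ^ 2 := by
  set d : E := y - x with hd
  set ψ : ℝ → ℝ := fun t => f (x + t • d) - t * ⟪gradf x, d⟫ - L * t ^ 2 / 2 * ‖d‖ ^ 2 with hψ
  have hψderiv : ∀ t : ℝ, HasDerivAt ψ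
      (⟪gradf (x + t • d), d⟫ - ⟪gradf x, d⟫ - L * t * ‖d‖ ^ 2) t := by
    intro t
    have h1 := fcomp_deriv f gradf hgrad x d t
    have h2 : HasDerivAt (fun t : ℝ => t * ⟪gradf x, d⟫) ⟪gradf x, d⟫ t := by
      simpa using (hasDerivAt_id t).mul_const ⟪gradf x, d⟫
    have h3 : HasDerivAt (fun t : ℝ => L * t ^ 2 / 2 * ‖d‖ ^ 2) (L * t * ‖d‖ ^ 2) t := by
      have : HasDerivAt (fun t : ℝ => L * t ^ 2 / 2 * ‖d‖ ^ 2) (L * (2 * t) / 2 * ‖d‖ ^ 2) t := by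
        exact ((((hasDerivAt_pow 2 t).const_mul L).div_const 2).mul_const _).congr_deriv (by ring)
      convert this using 1; ring
    exact (h1.sub h2).sub h3
  have hanti : AntitoneOn ψ (Set.Icc (0:ℝ) 1) := by
    apply antitoneOn_of_hasDerivWithinAt_nonpos (convex_Icc 0 1)
      (fun t _ => (hψderiv t).continuousAt.continuousWithinAt)
      (fun t _ => (hψderiv t).hasDerivWithinAt)
    intro t ht
    rw [interior_Icc] at ht
    have hb : ⟪gradf (x + t • d) - gradf x, d⟫ ≤ L * t * ‖d‖ ^ 2 := by
      calc ⟪gradf (x + t • d) - gradf x, d⟫ ≤ ‖gradf (x + t • d) - gradf x‖ * ‖d‖ :=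
            real_inner_le_norm _ _
        _ ≤ (L * ‖(x + t • d) - x‖) * ‖d‖ := by
            gcongr; exact hlip _ _
        _ = L * t * ‖d‖ ^ 2 := by
            rw [add_sub_cancel_left, norm_smul, Real.norm_eq_abs,
              abs_of_pos ht.1]; ring
    rw [inner_sub_left] at hb
    linarith
  have key := hanti (Set.left_mem_Icc.2 zero_le_one) (Set.right_mem_Icc.2 zero_le_one)
    zero_le_one
  simp only [hψ, zero_smul, add_zero, one_smul, zero_mul, one_mul, one_pow, mul_one] at key
  have hxy : x + d = y := by rw [hd]; abel
  rw [hxy] at key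
  linarith [sq_nonneg ‖d‖]

/-- Strengthened gradient inequality. -/
private lemma key_ineq {E : Type*} [NormedAddCommGroup E] [InnerProductSpace ℝ E]
    (f : E → ℝ) (gradf : E → E)
    (hgrad : ∀ x : E, HasFDerivAt f (innerSL ℝ (gradf x)) x)
    (hf : ConvexOn ℝ Set.univ f)
    (L : ℝ) (hL : 0 < L)
    (hlip : ∀ x y : E, ‖gradf x - gradf y‖ ≤ L * ‖x - y‖) (x y : E) :
    f x + ⟪gradf x, y - x⟫ + 1 / (2 * L) * ‖gradf y - gradf x‖ ^ 2 ≤ f y := by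
  set φ : E → ℝ := fun z => f z - ⟪gradf x, z⟫ with hφ
  have hφgrad : ∀ z : E, HasFDerivAt φ (innerSL ℝ (gradf z - gradf x)) z := by
    intro z
    have := (hgrad z).sub (innerSL ℝ (gradf x)).hasFDerivAt
    rw [map_sub]; exact this
  have hφconv : ConvexOn ℝ Set.univ φ := by
    refine hf.add ⟨convex_univ, ?_⟩
    intro a _ b _ s t hs ht hst
    simp only [inner_add_right, inner_smul_right, neg_add, smul_eq_mul]
    ring_nf
    exact le_of_eq (by ring)
  have hφlip : ∀ a b : E, ‖(gradf a - gradf x) - (gradf b - gradf x)‖ ≤ L * ‖a - b‖ := by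
    intro a b; simpa using hlip a b
  -- φ is minimized at x
  have hmin : ∀ z : E, φ x ≤ φ z := by
    intro z
    have := grad_ineq φ (fun z => gradf z - gradf x) hφgrad hφconv x z
    simpa using this
  -- descent step for φ from y
  set w : E := y - (1 / L) • (gradf y - gradf x) with hw
  have hdesc := descent φ (fun z => gradf z - gradf x) hφgrad L hL hφlip y w
  have hwy : w - y = -((1 / L) • (gradf y - gradf x)) := by rw [hw]; abel
  rw [hwy] at hdesc
  have hchain : φ x ≤ φ y - 1 / (2 * L) * ‖gradf y - gradf x‖ ^ 2 := by
    refine le_trans (hmin w) (le_trans hdesc (le_of_eq ?_))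
    rw [inner_neg_right, real_inner_smul_right, real_inner_self_eq_norm_sq,
      norm_neg, norm_smul, Real.norm_eq_abs, abs_of_pos (by positivity : (0:ℝ) < 1 / L)]
    field_simp
    ring
  simp only [hφ] at hchain
  have hsub : ⟪gradf x, y - x⟫ = ⟪gradf x, y⟫ - ⟪gradf x, x⟫ := inner_sub_right _ _ _
  rw [hsub]
  linarith

/-- Cocoercivity of a convex function with Lipschitz gradient:
if `f` is convex and `∇f` is `L`-Lipschitz with `L > 0`, then
`⟪∇f(x) − ∇f(y), x − y⟫ ≥ (1/L)·‖∇f(x) − ∇f(y)‖²`. -/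
theorem stmt11
    {E : Type*} [NormedAddCommGroup E] [InnerProductSpace ℝ E]
    (f : E → ℝ) (gradf : E → E)
    (hgrad : ∀ x : E, HasFDerivAt f (innerSL ℝ (gradf x)) x)
    (hf : ConvexOn ℝ Set.univ f)
    (L : ℝ) (hL : 0 < L)
    (hlip : ∀ x y : E, ‖gradf x - gradf y‖ ≤ L * ‖x - y‖) :
    ∀ x y : E, ⟪gradf x - gradf y, x - y⟫ ≥ (1 / L) * ‖gradf x - gradf y‖ ^ 2 := by
  intro x y
  have h1 := key_ineq f gradf hgrad hf L hL hlip x y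
  have h2 := key_ineq f gradf hgrad hf L hL hlip y x
  have hsym : ‖gradf x - gradf y‖ = ‖gradf y - gradf x‖ := norm_sub_rev _ _
  have hxy : ⟪gradf x, y - x⟫ + ⟪gradf y, x - y⟫ = -⟪gradf x - gradf y, x - y⟫ := by
    rw [inner_sub_left]
    rw [show y - x = -(x - y) by abel, inner_neg_right]
    ring
  rw [ge_iff_le, hsym]
  rw [hsym] at h2
  have hhalf : 1 / (2 * L) * ‖gradf y - gradf x‖ ^ 2 + 1 / (2 * L) * ‖gradf y - gradf x‖ ^ 2
      = 1 / L * ‖gradf y - gradf x‖ ^ 2 := by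
    rw [← add_mul]
    congr 1
    field_simp
    norm_num
  linarith
end
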